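/- In every standard dynamic Odintsov–Wansing model, the schema ⟨α*⟩φ → (φ ∨ ⟨α*⟩(¬φ ∧ ⟨α⟩φ)) is valid. -/
import Mathlib


mutual
inductive DynProg : Type where
  | atom : ℕ → DynProg
  | seq : DynProg → DynProg → DynProg
  | union : DynProg → DynProg → DynProg
  | star : DynProg → DynProg
  | test : DynForm → DynProg
inductive DynForm : Type where
  | atom : ℕ → DynForm
  | bot  : DynForm
  | snot : DynForm → DynForm
  | and  : DynForm → DynForm → DynForm
  | or   : DynForm → DynForm → DynForm
  | imp  : DynForm → DynForm → DynForm
  | box  : DynProg → DynForm → DynForm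
  | dia  : DynProg → DynForm → DynForm
end

def DynForm.neg (φ : DynForm) : DynForm := .imp φ .bot

def DynForm.biimp (φ ψ : DynForm) : DynForm := .and (.imp φ ψ) (.imp ψ φ)

structure DynModel : Type 1 where
  S : Type
  ne : Nonempty S
  Ra : ℕ → S → S → Prop
  Vp : ℕ → S → Prop
  Vm : ℕ → S → Prop

mutual
def progRel (M : DynModel) : DynProg → M.S → M.S → Prop
  | .atom a, x, y => M.Ra a x y
  | .seq α β, x, z => ∃ y, progRel M α x y ∧ progRel M β y z
  | .union α β, x, y => progRel M α x y ∨ progRel M β x y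
  | .star α, x, y => Relation.ReflTransGen (fun u v => progRel M α u v) x y
  | .test φ, x, y => x = y ∧ dverify M x φ
def dverify (M : DynModel) : M.S → DynForm → Prop
  | x, .atom p => M.Vp p x
  | _, .bot => False
  | x, .snot φ => dfalsify M x φ
  | x, .and φ ψ => dverify M x φ ∧ dverify M x ψ
  | x, .or φ ψ => dverify M x φ ∨ dverify M x ψ
  | x, .imp φ ψ => dverify M x φ → dverify M x ψ
  | x, .box α φ => ∀ y, progRel M α x y → dverify M y φ
  | x, .dia α φ => ∃ y, progRel M α x y ∧ dverify M y φ
def dfalsify (M : DynModel) : M.S → DynForm → Prop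
  | x, .atom p => M.Vm p x
  | _, .bot => True
  | x, .snot φ => dverify M x φ
  | x, .and φ ψ => dfalsify M x φ ∨ dfalsify M x ψ
  | x, .or φ ψ => dfalsify M x φ ∧ dfalsify M x ψ
  | x, .imp φ ψ => dverify M x φ ∧ dfalsify M x ψ
  | x, .box α φ => ∃ y, progRel M α x y ∧ dfalsify M y φ
  | x, .dia α φ => ∀ y, progRel M α x y → dfalsify M y φ
end

def validIn (M : DynModel) (φ : DynForm) : Prop := ∀ x : M.S, dverify M x φ

def DynValid (φ : DynForm) : Prop := ∀ M : DynModel, validIn M φ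


lemma stmt13_aux (M : DynModel) (α : DynProg) (φ : DynForm) :
    ∀ x y : M.S, Relation.ReflTransGen (fun u v => progRel M α u v) x y →
      dverify M y φ →
      dverify M x φ ∨ ∃ z, Relation.ReflTransGen (fun u v => progRel M α u v) x z ∧
        ¬ dverify M z φ ∧ ∃ w, progRel M α z w ∧ dverify M w φ := by
  intro x y h
  induction h using Relation.ReflTransGen.head_induction_on with
  | refl => intro hy; exact Or.inl hy
  | head hstep _ ih =>
    intro hy
    rename_i a b _
    by_cases ha : dverify M a φ
    · exact Or.inl ha
    · rcases ih hy with h1 | ⟨z, hz, hnz, w, hw, hwφ⟩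
      · exact Or.inr ⟨a, Relation.ReflTransGen.refl, ha, b, hstep, h1⟩
      · exact Or.inr ⟨z, Relation.ReflTransGen.head hstep hz, hnz, w, hw, hwφ⟩

theorem stmt13 (M : DynModel) (α : DynProg) (φ : DynForm) :
    validIn M (.imp (.dia (.star α) φ)
      (.or φ (.dia (.star α) (.and (DynForm.neg φ) (.dia α φ))))) := by
  intro x
  show dverify M x (.dia (.star α) φ) → _
  rintro ⟨y, hxy, hy⟩
  rcases stmt13_aux M α φ x y hxy hy with h | ⟨z, hz, hnz, w, hw, hwφ⟩
  · exact Or.inl h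
  · exact Or.inr ⟨z, hz, fun h => hnz h, w, hw, hwφ⟩
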